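/- Let R be a commutative ring with unity whose characteristic equals n, where n is a prime number, let G = ⟨x | x^n = 1⟩ be a cyclic group of order n, and let σ, τ be the R-algebra endomorphisms of RG with σ(x) = x^u and τ(x) = x^{u+v}, where u, v ∈ {0, 1, …, n−1}. Let D : RG → RG be an R-linear map with D(1) = 0 satisfying D(x^k) = (Σ_{i+j=k−1, i,j ≥ 0} σ(x)^i τ(x)^j)·D(x) for every k ∈ {1, 2, …, n−1}, and suppose that D(x) is a unit of the ring RG. Then D is a (σ,τ)-derivation of RG if and only if σ = τ (equivalently, v = 0). -/

import Mathlib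

/-- The generator `x` of the cyclic group of order `n`, viewed inside the group ring
`R[Multiplicative (ZMod n)]`. -/
noncomputable def xgen (R : Type*) [CommRing R] (n : ℕ) :
    MonoidAlgebra R (Multiplicative (ZMod n)) :=
  MonoidAlgebra.of R (Multiplicative (ZMod n)) (Multiplicative.ofAdd (1 : ZMod n))

section helpers
set_option linter.unusedSectionVars false
variable {R : Type*} [CommRing R] {n : ℕ} [NeZero n]

lemma xgen_pow (k : ℕ) :
    xgen R n ^ k = MonoidAlgebra.single (Multiplicative.ofAdd (k : ZMod n)) 1 := by
  rw [xgen, MonoidAlgebra.of_apply, MonoidAlgebra.single_pow, one_pow]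
  congr 1
  rw [← ofAdd_nsmul]
  simp [nsmul_eq_mul]

lemma xgen_pow_mod (k : ℕ) : xgen R n ^ k = xgen R n ^ (k % n) := by
  rw [xgen_pow, xgen_pow, ZMod.natCast_mod]

lemma xgen_pow_n : xgen R n ^ n = 1 := by
  rw [xgen_pow]; simp [MonoidAlgebra.one_def]

lemma single_eq_smul_xgen_pow (g : Multiplicative (ZMod n)) (r : R) :
    MonoidAlgebra.single g r = r • xgen R n ^ (Multiplicative.toAdd g).val := by
  rw [xgen_pow]
  rw [ZMod.natCast_rightInverse (Multiplicative.toAdd g)]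
  rw [MonoidAlgebra.smul_single', mul_one]
  rfl

end helpers

/-- Suppose `char R = n` is prime, `σ x = x^u`, `τ x = x^{u+v}`
(`u, v < n`), and `D` is `R`-linear with `D 1 = 0`, satisfies the relations (2.1),
and `D x` is a unit of `RG`. Then `D` is a `(σ,τ)`-derivation iff `σ = τ`
(equivalently, `v = 0`). -/
theorem stmt14 {R : Type*} [CommRing R] (n u v : ℕ) [NeZero n]
    (hchar : ringChar R = n) (hp : n.Prime)
    (hu : u < n) (hv : v < n)
    (σ τ : MonoidAlgebra R (Multiplicative (ZMod n)) →ₐ[R] MonoidAlgebra R (Multiplicative (ZMod n)))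
    (hσ : σ (xgen R n) = xgen R n ^ u) (hτ : τ (xgen R n) = xgen R n ^ (u + v))
    (D : MonoidAlgebra R (Multiplicative (ZMod n)) →ₗ[R] MonoidAlgebra R (Multiplicative (ZMod n)))
    (hD1 : D 1 = 0)
    (hrel : ∀ k : ℕ, 1 ≤ k → k ≤ n - 1 →
      D (xgen R n ^ k) =
        (∑ p ∈ Finset.HasAntidiagonal.antidiagonal (k - 1), σ (xgen R n) ^ p.1 * τ (xgen R n) ^ p.2) *
          D (xgen R n))
    (hunit : IsUnit (D (xgen R n))) :
    (∀ a b, D (a * b) = D a * τ b + σ a * D b) ↔ v = 0 := by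
  haveI : CharP R n := hchar ▸ ringChar.charP R
  set x : MonoidAlgebra R (Multiplicative (ZMod n)) := xgen R n with hx
  constructor
  · intro hder
    by_contra hv0
    have hn2 : 2 ≤ n := hp.two_le
    haveI : Nontrivial R := CharP.nontrivial_of_char_ne_one hp.ne_one
    have h3 : x ^ (n - 1) * x = 1 := by
      rw [← pow_succ, show n - 1 + 1 = n by omega, hx, xgen_pow_n]
    have h2 := hder (x ^ (n - 1)) x
    rw [h3, hD1, hrel (n - 1) (by omega) le_rfl, map_pow, hσ, hτ] at h2
    have hA : (∑ p ∈ Finset.HasAntidiagonal.antidiagonal (n - 1 - 1), (x ^ u) ^ p.1 * (x ^ (u + v)) ^ p.2) *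
        x ^ (u + v) + (x ^ u) ^ (n - 1) = 0 := by
      rw [← hunit.mul_left_eq_zero]
      linear_combination -h2
    have hsingles : ∀ p ∈ Finset.HasAntidiagonal.antidiagonal (n - 1 - 1),
        (x ^ u) ^ p.1 * (x ^ (u + v)) ^ p.2 * x ^ (u + v)
          = MonoidAlgebra.single
              (Multiplicative.ofAdd ((u * (n - 1) + v * (p.2 + 1) : ℕ) : ZMod n)) (1 : R) := by
      intro p hp'
      have hpp : p.1 + p.2 = n - 2 := by
        have := Finset.HasAntidiagonal.mem_antidiagonal.mp hp'; omega
      rw [← pow_mul, ← pow_mul, ← pow_add, ← pow_add, hx, xgen_pow]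
      have hexp : u * p.1 + (u + v) * p.2 + (u + v) = u * (n - 1) + v * (p.2 + 1) := by
        have h9 : u * p.1 + (u + v) * p.2 + (u + v) = u * (p.1 + p.2 + 1) + v * (p.2 + 1) := by
          ring
        rw [h9, hpp, show n - 2 + 1 = n - 1 by omega]
      rw [hexp]
    rw [Finset.sum_mul, Finset.sum_congr rfl hsingles, ← pow_mul, hx, xgen_pow] at hA
    have hA2 : ((∑ p ∈ Finset.HasAntidiagonal.antidiagonal (n - 1 - 1), MonoidAlgebra.single
          (Multiplicative.ofAdd ((u * (n - 1) + v * (p.2 + 1) : ℕ) : ZMod n)) 1) +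
          MonoidAlgebra.single (Multiplicative.ofAdd ((u * (n - 1) : ℕ) : ZMod n)) 1 :
            MonoidAlgebra R (Multiplicative (ZMod n))) = 0 := hA
    have hA' := DFunLike.congr_fun (congrArg MonoidAlgebra.coeff hA2)
      (Multiplicative.ofAdd ((u * (n - 1) : ℕ) : ZMod n))
    rw [MonoidAlgebra.coeff_add, MonoidAlgebra.coeff_sum, MonoidAlgebra.coeff_zero] at hA'
    simp only [MonoidAlgebra.coeff_single] at hA'
    rw [Finsupp.add_apply, Finsupp.zero_apply, Finset.sum_apply',
      Finsupp.single_eq_same, Finset.sum_eq_zero (fun p hp' => ?_), zero_add] at hA'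
    · exact one_ne_zero hA'
    · apply Finsupp.single_eq_of_ne
      intro hcontra
      have hc2 : ((u * (n - 1) + v * (p.2 + 1) : ℕ) : ZMod n) = ((u * (n - 1) : ℕ) : ZMod n) :=
        Multiplicative.ofAdd.injective hcontra.symm
      rw [Nat.cast_add] at hc2
      have h6 : ((v * (p.2 + 1) : ℕ) : ZMod n) = 0 := add_eq_left.mp hc2
      rw [ZMod.natCast_eq_zero_iff] at h6
      rcases (Nat.Prime.dvd_mul hp).mp h6 with h7 | h7
      · have := Nat.le_of_dvd (by omega) h7; omega
      · have hple : p.2 ≤ n - 2 := by have := Finset.HasAntidiagonal.mem_antidiagonal.mp hp'; omega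
        have := Nat.le_of_dvd (by omega) h7; omega
  · intro hv0
    subst hv0
    rw [Nat.add_zero] at hτ
    -- smul kill: n • a = 0
    have hnsmul : ∀ a : MonoidAlgebra R (Multiplicative (ZMod n)), (n : ℕ) • a = 0 := by
      intro a
      rw [← Nat.cast_smul_eq_nsmul R n a, CharP.cast_eq_zero R n, zero_smul]
    have hmodsmul : ∀ (k : ℕ) (a : MonoidAlgebra R (Multiplicative (ZMod n))),
        k • a = (k % n) • a := by
      intro k a
      conv_lhs => rw [← Nat.mod_add_div k n]
      rw [add_nsmul, mul_comm, mul_nsmul, hnsmul, add_zero]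
    have hDpow : ∀ k : ℕ, 1 ≤ k → k ≤ n - 1 → D (x ^ k) = k • ((x ^ u) ^ (k - 1) * D x) := by
      intro k h1 h2
      rw [hrel k h1 h2, hσ, hτ]
      rw [Finset.sum_congr rfl (fun p hp => by
        rw [← pow_add, Finset.HasAntidiagonal.mem_antidiagonal.mp hp] :
          ∀ p ∈ Finset.HasAntidiagonal.antidiagonal (k - 1),
            (x ^ u) ^ p.1 * (x ^ u) ^ p.2 = (x ^ u) ^ (k - 1))]
      rw [Finset.sum_const, Finset.Nat.card_antidiagonal, smul_mul_assoc]
      congr 1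
      omega
    have hDpow' : ∀ k : ℕ, D (x ^ k) = k • ((x ^ u) ^ (k - 1) * D x) := by
      intro k
      rcases Nat.eq_zero_or_pos (k % n) with h0 | hpos
      · obtain ⟨m, rfl⟩ := Nat.dvd_of_mod_eq_zero h0
        rw [pow_mul, hx, xgen_pow_n, one_pow, hD1, mul_comm n m, mul_nsmul, hnsmul]
      · have hklt : k % n ≤ n - 1 := by
          have := Nat.mod_lt k (NeZero.pos n); omega
        rw [hx, xgen_pow_mod k, ← hx, hDpow _ hpos hklt, ← hmodsmul]
        congr 2
        rw [← pow_mul, ← pow_mul, hx, xgen_pow_mod (u * (k - 1)), xgen_pow_mod (u * (k % n - 1))]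
        congr 1
        have h1 : k - 1 = (k % n - 1) + n * (k / n) := by
          have := Nat.mod_add_div k n; omega
        rw [h1, Nat.mul_add, ← Nat.mul_assoc, Nat.mul_comm u n, Nat.mul_assoc,
          Nat.add_mul_mod_self_left]
    have hσpow : ∀ k : ℕ, σ (x ^ k) = (x ^ u) ^ k := by
      intro k; rw [map_pow, hσ]
    have hτpow : ∀ k : ℕ, τ (x ^ k) = (x ^ u) ^ k := by
      intro k; rw [map_pow, hτ]
    have hbasis : ∀ i j : ℕ, D (x ^ i * x ^ j) = D (x ^ i) * τ (x ^ j) + σ (x ^ i) * D (x ^ j) := by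
      intro i j
      rcases Nat.eq_zero_or_pos i with rfl | hi
      · simp [hD1]
      rcases Nat.eq_zero_or_pos j with rfl | hj
      · simp [hD1]
      rw [← pow_add, hDpow' (i + j), hDpow' i, hDpow' j, hσpow, hτpow]
      rw [smul_mul_assoc, mul_smul_comm, add_nsmul]
      congr 1
      · congr 1
        rw [mul_right_comm, ← pow_add]
        congr 2
        omega
      · rw [← mul_assoc, ← pow_add]
        congr 3
        omega
    intro a b
    induction a using MonoidAlgebra.induction_linear with
    | zero => simp
    | add f g hf hg =>
      simp only [add_mul, map_add, hf, hg]; ring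
    | single g r =>
      induction b using MonoidAlgebra.induction_linear with
      | zero => simp
      | add f g' hf hg =>
        simp only [mul_add, map_add, hf, hg]; ring
      | single h s =>
        rw [single_eq_smul_xgen_pow g r, single_eq_smul_xgen_pow h s]
        simp only [smul_mul_assoc, mul_smul_comm, map_smul, smul_smul, smul_add]
        rw [hbasis, smul_add]
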